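/- The symmetric bilinear form J_X(η₁,η₂) := B⁰(X,η₁,η₂,X) restricted to W := Span{Y, Ỹ, Z₁,…,Z_p, Z̃₁,…,Z̃_p} is nondegenerate of signature (p+1, p+1), and the restriction map g ↦ g|_W is a group isomorphism from the isotropy group G_X(𝔄_0) := {g ∈ G(𝔄_0) : gX = X} onto the full orthogonal group O(W, J_X|_W) = {γ ∈ GL(W) : J_X(γη₁, γη₂) = J_X(η₁, η₂) for all η₁, η₂ ∈ W}. -/

import Mathlib

/-- Index type for the basis {X, Y, Z_1,...,Z_p, Ỹ, Z̃_1,...,Z̃_p} of V = ℝ^{3+2p}. -/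
inductive Idx (p : ℕ) : Type where
  | X : Idx p
  | Y : Idx p
  | Z : Fin p → Idx p
  | Yt : Idx p
  | Zt : Fin p → Idx p
  deriving DecidableEq, Fintype

/-- V := ℝ^{3+2p}, realized as functions on the index set. -/
abbrev V (p : ℕ) : Type := Idx p → ℝ

/-- The basis vectors of `V p`. -/
noncomputable def e (p : ℕ) (a : Idx p) : V p := fun b => if b = a then 1 else 0

/-- `T p k` is the totally symmetric multilinear form (with the first two of its `k+2`
arguments singled out) so that `B^k(u,v,w,x;η) = u_X x_X T(v,w,η) - ...`.
For `1 ≤ k ≤ p` its nonzero components are: one argument is `Z_k`, the others `Y`;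
for `k = 0` the nonzero components are `T(Y,Ỹ) = T(Z_i,Z̃_i) = 1`;
for `k > p` (used for `k = p+1, p+2`) the only nonzero component has all arguments `Y`. -/
noncomputable def T (p k : ℕ) (a b : V p) (η : Fin k → V p) : ℝ :=
  if hk : 1 ≤ k ∧ k ≤ p then
    (a (Idx.Z ⟨k - 1, by omega⟩) * b Idx.Y + a Idx.Y * b (Idx.Z ⟨k - 1, by omega⟩)) *
        ∏ j, η j Idx.Y +
      a Idx.Y * b Idx.Y *
        ∑ j, η j (Idx.Z ⟨k - 1, by omega⟩) * ∏ l ∈ Finset.univ.erase j, η l Idx.Y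
  else if k = 0 then
    a Idx.Y * b Idx.Yt + b Idx.Y * a Idx.Yt +
      ∑ i : Fin p, (a (Idx.Z i) * b (Idx.Zt i) + b (Idx.Z i) * a (Idx.Zt i))
  else a Idx.Y * b Idx.Y * ∏ j, η j Idx.Y

/-- The tensor `B^k ∈ ⊗^{4+k} V*`: it has the curvature symmetries in the first four
arguments, is totally symmetric in the last `k`, and its nonzero components on basis
vectors, up to these symmetries, are exactly those prescribed in the paper:
`B⁰(X,Y,Ỹ,X) = B⁰(X,Z_i,Z̃_i,X) = 1`;
`B^k(X,Y,Z_k,X;Y,…,Y) = B^k(X,Y,Y,X;Z_k,Y,…,Y) = … = B^k(X,Y,Y,X;Y,…,Y,Z_k) = 1` for `1 ≤ k ≤ p`;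
`B^{p+1}(X,Y,Y,X;Y,…,Y) = 1` and `B^{p+2}(X,Y,Y,X;Y,…,Y) = 1`. -/
noncomputable def Bc (p k : ℕ) (u v w x : V p) (η : Fin k → V p) : ℝ :=
  u Idx.X * x Idx.X * T p k v w η - u Idx.X * w Idx.X * T p k v x η -
    v Idx.X * x Idx.X * T p k u w η + v Idx.X * w Idx.X * T p k u x η

/-- `GA p k g` means `g ∈ G(𝔄_k)`, i.e. the invertible linear map `g` of `V` satisfies
`g* B^i = B^i` for all `0 ≤ i ≤ k`. -/
def GA (p k : ℕ) (g : V p ≃ₗ[ℝ] V p) : Prop :=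
  ∀ i, i ≤ k → ∀ u v w x : V p, ∀ η : Fin i → V p,
    Bc p i (g u) (g v) (g w) (g x) (fun j => g (η j)) = Bc p i u v w x η

/-- The hyperplane `W = Span{Y,Ỹ,Z_i,Z̃_i}`, realized as the functions on the indices
different from `X`. -/
abbrev Wsub (p : ℕ) : Type := {a : Idx p // a ≠ Idx.X} → ℝ

/-- The inclusion `W → V` (extension by zero on the `X`-coordinate). -/
noncomputable def inclW (p : ℕ) (w : Wsub p) : V p :=
  fun a => if h : a = Idx.X then 0 else w ⟨a, h⟩

/-- The Jacobi form `J_X(η₁,η₂) := B⁰(X,η₁,η₂,X)` on `V`. -/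
noncomputable def JX (p : ℕ) (u v : V p) : ℝ :=
  Bc p 0 (e p Idx.X) u v (e p Idx.X) Fin.elim0

/-- The restriction of `J_X` to `W`. -/
noncomputable def JW (p : ℕ) (w₁ w₂ : Wsub p) : ℝ := JX p (inclW p w₁) (inclW p w₂)

/-- The restriction to `W` of a map `g : V → V` (mapping `W` to itself). -/
noncomputable def resW (p : ℕ) (g : V p → V p) (w : Wsub p) : Wsub p :=
  fun a => g (inclW p w) a.val

namespace S7
variable {p : ℕ}

noncomputable def T0 (p : ℕ) (a b : V p) : ℝ :=
  a Idx.Y * b Idx.Yt + b Idx.Y * a Idx.Yt +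
    ∑ i : Fin p, (a (Idx.Z i) * b (Idx.Zt i) + b (Idx.Z i) * a (Idx.Zt i))

lemma T_zero (a b : V p) (η : Fin 0 → V p) : T p 0 a b η = T0 p a b := by
  simp [T, T0]

lemma Bc_zero (u v w x : V p) (η : Fin 0 → V p) :
    Bc p 0 u v w x η = u Idx.X * x Idx.X * T0 p v w - u Idx.X * w Idx.X * T0 p v x -
      v Idx.X * x Idx.X * T0 p u w + v Idx.X * w Idx.X * T0 p u x := by
  simp [Bc, T_zero]

lemma eX_X : e p Idx.X Idx.X = 1 := by simp [e]

lemma T0_eX_right (a : V p) : T0 p a (e p Idx.X) = 0 := by simp [T0, e]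
lemma T0_eX_left (a : V p) : T0 p (e p Idx.X) a = 0 := by simp [T0, e]
lemma T0_right_eYt (a : V p) : T0 p a (e p Idx.Yt) = a Idx.Y := by simp [T0, e]
lemma T0_right_eY (a : V p) : T0 p a (e p Idx.Y) = a Idx.Yt := by simp [T0, e]
lemma T0_eY_eYt : T0 p (e p Idx.Y) (e p Idx.Yt) = 1 := by simp [T0, e]
lemma T0_eYt_eY : T0 p (e p Idx.Yt) (e p Idx.Y) = 1 := by simp [T0, e]
lemma T0_eY_eY : T0 p (e p Idx.Y) (e p Idx.Y) = 0 := by simp [T0, e]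

lemma JX_eq (u v : V p) : JX p u v = T0 p u v := by
  rw [JX, Bc_zero]
  simp [eX_X, T0_eX_left, T0_eX_right]

section g
variable (g : V p ≃ₗ[ℝ] V p)

lemma T0_g (hg : GA p 0 g) (hgX : g (e p Idx.X) = e p Idx.X) (u v : V p) :
    T0 p (g u) (g v) = T0 p u v := by
  have h := hg 0 le_rfl (e p Idx.X) u v (e p Idx.X) Fin.elim0
  rw [hgX, Bc_zero, Bc_zero] at h
  simpa [eX_X, T0_eX_left, T0_eX_right] using h

lemma gX_coord (hg : GA p 0 g) (hgX : g (e p Idx.X) = e p Idx.X) (a : V p) :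
    g a Idx.X = a Idx.X := by
  have key : ∀ a b c : V p,
      g a Idx.X * T0 p b c - g b Idx.X * T0 p a c
        = a Idx.X * T0 p b c - b Idx.X * T0 p a c := by
    intro a b c
    have h := hg 0 le_rfl a b c (e p Idx.X) Fin.elim0
    rw [hgX, Bc_zero, Bc_zero] at h
    simp only [eX_X, T0_eX_right, T0_g g hg hgX, mul_one, mul_zero, sub_zero, add_zero] at h
    linarith
  have hY0 : g (e p Idx.Y) Idx.X = 0 := by
    have k := key (e p Idx.Y) (e p Idx.Yt) (e p Idx.Y)
    rw [T0_eYt_eY, T0_eY_eY] at k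
    simp [e] at k
    linarith
  have k := key a (e p Idx.Y) (e p Idx.Yt)
  rw [T0_eY_eYt, T0_right_eYt, hY0] at k
  simp [e] at k
  linarith

end g
end S7
namespace S7
variable {p : ℕ}

noncomputable def projW (p : ℕ) (v : V p) : Wsub p := fun a => v a.val

lemma inclW_X (w : Wsub p) : inclW p w Idx.X = 0 := dif_pos rfl

lemma inclW_ne (w : Wsub p) (a : Idx p) (h : a ≠ Idx.X) : inclW p w a = w ⟨a, h⟩ :=
  dif_neg h

lemma projW_inclW (w : Wsub p) : projW p (inclW p w) = w := by
  funext a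
  simp [projW, inclW_ne _ _ a.prop]

lemma inclW_projW (v : V p) (hv : v Idx.X = 0) : inclW p (projW p v) = v := by
  funext a
  by_cases h : a = Idx.X
  · subst h; rw [inclW_X, hv]
  · rw [inclW_ne _ _ h]; rfl

lemma eX_decomp (v : V p) : v Idx.X • e p Idx.X + inclW p (projW p v) = v := by
  funext a
  by_cases h : a = Idx.X
  · subst h; simp [inclW_X, e]
  · simp [inclW_ne _ _ h, e, h, projW]

lemma resW_eq (g : V p → V p) (w : Wsub p) : resW p g w = projW p (g (inclW p w)) := rfl

lemma inclW_resW (g : V p → V p) (hgc : ∀ v, g v Idx.X = v Idx.X) (w : Wsub p) :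
    inclW p (resW p g w) = g (inclW p w) := by
  rw [resW_eq, inclW_projW]
  rw [hgc, inclW_X]

lemma T0_projW (a b : V p) :
    T0 p (inclW p (projW p a)) (inclW p (projW p b)) = T0 p a b := by
  simp [T0, inclW, projW]

lemma JW_T0 (w₁ w₂ : Wsub p) : JW p w₁ w₂ = T0 p (inclW p w₁) (inclW p w₂) := JX_eq _ _

noncomputable def inclL (p : ℕ) : Wsub p →ₗ[ℝ] V p where
  toFun := inclW p
  map_add' w₁ w₂ := by
    funext a
    by_cases h : a = Idx.X <;> simp [inclW, h]
  map_smul' c w := by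
    funext a
    by_cases h : a = Idx.X <;> simp [inclW, h]

noncomputable def projL (p : ℕ) : V p →ₗ[ℝ] Wsub p where
  toFun := projW p
  map_add' _ _ := rfl
  map_smul' _ _ := rfl

end S7
namespace S7
variable {p : ℕ}

noncomputable def resL (g : V p →ₗ[ℝ] V p) : Wsub p →ₗ[ℝ] Wsub p :=
  projL p ∘ₗ g ∘ₗ inclL p

lemma resL_apply (g : V p →ₗ[ℝ] V p) (w : Wsub p) :
    resL g w = projW p (g (inclW p w)) := rfl

section g
variable (g : V p ≃ₗ[ℝ] V p)

lemma gsymm_coord (hg : GA p 0 g) (hgX : g (e p Idx.X) = e p Idx.X) :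
    ∀ v : V p, g.symm v Idx.X = v Idx.X := by
  intro v
  have := gX_coord g hg hgX (g.symm v)
  rw [g.apply_symm_apply] at this; exact this.symm

lemma gsymmX (hgX : g (e p Idx.X) = e p Idx.X) : g.symm (e p Idx.X) = e p Idx.X := by
  rw [← hgX, g.symm_apply_apply]; exact hgX.symm

noncomputable def resEquiv (hg : GA p 0 g) (hgX : g (e p Idx.X) = e p Idx.X) :
    Wsub p ≃ₗ[ℝ] Wsub p :=
  LinearEquiv.ofLinear (resL (g : V p →ₗ[ℝ] V p)) (resL (g.symm : V p →ₗ[ℝ] V p))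
    (by
      ext w
      simp only [LinearMap.comp_apply, LinearMap.id_apply, resL_apply, LinearEquiv.coe_coe]
      rw [inclW_projW _ (by rw [gsymm_coord g hg hgX, inclW_X]),
        g.apply_symm_apply, projW_inclW])
    (by
      ext w
      simp only [LinearMap.comp_apply, LinearMap.id_apply, resL_apply, LinearEquiv.coe_coe]
      rw [inclW_projW _ (by rw [gX_coord g hg hgX, inclW_X]),
        g.symm_apply_apply, projW_inclW])

lemma resEquiv_coe (hg : GA p 0 g) (hgX : g (e p Idx.X) = e p Idx.X) :
    ⇑(resEquiv g hg hgX) = resW p ⇑g := rfl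

lemma JW_resW (hg : GA p 0 g) (hgX : g (e p Idx.X) = e p Idx.X) (w₁ w₂ : Wsub p) :
    JW p (resW p ⇑g w₁) (resW p ⇑g w₂) = JW p w₁ w₂ := by
  rw [JW_T0, JW_T0, inclW_resW _ (gX_coord g hg hgX), inclW_resW _ (gX_coord g hg hgX),
    T0_g g hg hgX]

end g
end S7
namespace S7
variable {p : ℕ}

lemma inj_aux (g₁ g₂ : V p ≃ₗ[ℝ] V p) (hg₁ : GA p 0 g₁) (hX₁ : g₁ (e p Idx.X) = e p Idx.X)
    (hg₂ : GA p 0 g₂) (hX₂ : g₂ (e p Idx.X) = e p Idx.X)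
    (h : resW p ⇑g₁ = resW p ⇑g₂) : g₁ = g₂ := by
  apply LinearEquiv.ext
  intro v
  have h1 : g₁ v = v Idx.X • e p Idx.X + inclW p (resW p ⇑g₁ (projW p v)) := by
    conv_lhs => rw [← eX_decomp v]
    rw [map_add, map_smul, hX₁, inclW_resW _ (gX_coord g₁ hg₁ hX₁)]
  have h2 : g₂ v = v Idx.X • e p Idx.X + inclW p (resW p ⇑g₂ (projW p v)) := by
    conv_lhs => rw [← eX_decomp v]
    rw [map_add, map_smul, hX₂, inclW_resW _ (gX_coord g₂ hg₂ hX₂)]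
  rw [h1, h2, h]

lemma comp_aux (g₁ g₂ : V p ≃ₗ[ℝ] V p) (hg₂ : GA p 0 g₂) (hX₂ : g₂ (e p Idx.X) = e p Idx.X) :
    resW p (⇑g₁ ∘ ⇑g₂) = resW p ⇑g₁ ∘ resW p ⇑g₂ := by
  funext w
  show resW p (⇑g₁ ∘ ⇑g₂) w = resW p ⇑g₁ (resW p ⇑g₂ w)
  rw [resW_eq, resW_eq, inclW_resW _ (gX_coord g₂ hg₂ hX₂)]
  rfl

end S7
namespace S7
variable {p : ℕ}

noncomputable def gLin (γ : Wsub p →ₗ[ℝ] Wsub p) : V p →ₗ[ℝ] V p :=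
  (LinearMap.proj Idx.X : V p →ₗ[ℝ] ℝ).smulRight (e p Idx.X) + inclL p ∘ₗ γ ∘ₗ projL p

lemma gLin_apply (γ : Wsub p →ₗ[ℝ] Wsub p) (v : V p) :
    gLin γ v = v Idx.X • e p Idx.X + inclW p (γ (projW p v)) := rfl

lemma gLin_X (γ : Wsub p →ₗ[ℝ] Wsub p) (v : V p) : gLin γ v Idx.X = v Idx.X := by
  rw [gLin_apply]
  simp [inclW_X, e]

lemma projW_gLin (γ : Wsub p →ₗ[ℝ] Wsub p) (v : V p) :
    projW p (gLin γ v) = γ (projW p v) := by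
  funext a
  rw [gLin_apply]
  show (v Idx.X • e p Idx.X) a.val + inclW p (γ (projW p v)) a.val = _
  rw [inclW_ne _ _ a.prop]
  simp [e, a.prop]

noncomputable def gEquiv (γ : Wsub p ≃ₗ[ℝ] Wsub p) : V p ≃ₗ[ℝ] V p :=
  LinearEquiv.ofLinear (gLin (γ : Wsub p →ₗ[ℝ] Wsub p)) (gLin (γ.symm : Wsub p →ₗ[ℝ] Wsub p))
    (by
      apply LinearMap.ext; intro v
      simp only [LinearMap.comp_apply, LinearMap.id_apply]
      rw [gLin_apply, gLin_X, projW_gLin]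
      simp only [LinearEquiv.coe_coe, LinearEquiv.apply_symm_apply]
      exact eX_decomp v)
    (by
      apply LinearMap.ext; intro v
      simp only [LinearMap.comp_apply, LinearMap.id_apply]
      rw [gLin_apply, gLin_X, projW_gLin]
      simp only [LinearEquiv.coe_coe, LinearEquiv.symm_apply_apply]
      exact eX_decomp v)

lemma gEquiv_apply (γ : Wsub p ≃ₗ[ℝ] Wsub p) (v : V p) :
    gEquiv γ v = v Idx.X • e p Idx.X + inclW p (γ (projW p v)) := rfl

lemma gEquiv_X (γ : Wsub p ≃ₗ[ℝ] Wsub p) : gEquiv γ (e p Idx.X) = e p Idx.X := by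
  rw [gEquiv_apply]
  have : projW p (e p Idx.X) = 0 := by
    funext a
    simp [projW, e, a.prop]
  rw [this, map_zero, eX_X]
  funext b
  by_cases h : b = Idx.X <;> simp [inclW, h, e]

lemma resW_gEquiv (γ : Wsub p ≃ₗ[ℝ] Wsub p) : resW p ⇑(gEquiv γ) = ⇑γ := by
  funext w
  rw [resW_eq]
  show projW p (gLin (γ : Wsub p →ₗ[ℝ] Wsub p) (inclW p w)) = γ w
  rw [projW_gLin, projW_inclW]
  rfl

lemma T0_JW (a b : V p) : T0 p a b = JW p (projW p a) (projW p b) := by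
  rw [JW_T0, T0_projW]

lemma gEquiv_GA (γ : Wsub p ≃ₗ[ℝ] Wsub p)
    (hγ : ∀ w₁ w₂ : Wsub p, JW p (γ w₁) (γ w₂) = JW p w₁ w₂) : GA p 0 (gEquiv γ) := by
  intro i hi
  rw [Nat.le_zero] at hi
  subst hi
  intro u v w x η
  have hT : ∀ a b : V p, T0 p (gEquiv γ a) (gEquiv γ b) = T0 p a b := by
    intro a b
    rw [T0_JW]
    show JW p (projW p (gLin _ a)) (projW p (gLin _ b)) = _
    rw [projW_gLin, projW_gLin]
    show JW p (γ (projW p a)) (γ (projW p b)) = _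
    rw [hγ, ← T0_JW]
  have hX : ∀ a : V p, gEquiv γ a Idx.X = a Idx.X := fun a => gLin_X _ a
  rw [Bc_zero, Bc_zero, hX, hX, hX, hX, hT, hT, hT, hT]

end S7
namespace S7
variable {p : ℕ}

def iY : {a : Idx p // a ≠ Idx.X} := ⟨Idx.Y, nofun⟩
def iYt : {a : Idx p // a ≠ Idx.X} := ⟨Idx.Yt, nofun⟩
def iZ (i : Fin p) : {a : Idx p // a ≠ Idx.X} := ⟨Idx.Z i, nofun⟩
def iZt (i : Fin p) : {a : Idx p // a ≠ Idx.X} := ⟨Idx.Zt i, nofun⟩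

lemma JW_apply (w₁ w₂ : Wsub p) :
    JW p w₁ w₂ = w₁ iY * w₂ iYt + w₂ iY * w₁ iYt +
      ∑ i : Fin p, (w₁ (iZ i) * w₂ (iZt i) + w₂ (iZ i) * w₁ (iZt i)) := by
  rw [JW_T0]
  simp [T0, inclW, iY, iYt, iZ, iZt]

noncomputable def dW (a : {b : Idx p // b ≠ Idx.X}) : Wsub p := fun b => if b = a then 1 else 0

lemma nondeg (w : Wsub p) (hw : ∀ w' : Wsub p, JW p w w' = 0) : w = 0 := by
  funext a
  rcases a with ⟨a, ha⟩
  match a with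
  | Idx.X => exact absurd rfl ha
  | Idx.Y =>
    have := hw (dW iYt)
    rw [JW_apply] at this
    simpa [dW, iY, iYt, iZ, iZt] using this
  | Idx.Yt =>
    have := hw (dW iY)
    rw [JW_apply] at this
    simpa [dW, iY, iYt, iZ, iZt] using this
  | Idx.Z i =>
    have := hw (dW (iZt i))
    rw [JW_apply] at this
    simpa [dW, iY, iYt, iZ, iZt, Finset.sum_ite_eq] using this
  | Idx.Zt i =>
    have := hw (dW (iZ i))
    rw [JW_apply] at this
    simpa [dW, iY, iYt, iZ, iZt, Finset.sum_ite_eq] using this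

end S7
namespace S7
variable {p : ℕ}

noncomputable def Emap (p : ℕ) (c : Fin (p + 1) ⊕ Fin (p + 1) → ℝ) : Wsub p := fun a =>
  match a with
  | ⟨Idx.X, _⟩ => 0
  | ⟨Idx.Y, _⟩ => c (.inl 0) + c (.inr 0)
  | ⟨Idx.Yt, _⟩ => 2⁻¹ * c (.inl 0) - 2⁻¹ * c (.inr 0)
  | ⟨Idx.Z i, _⟩ => c (.inl i.succ) + c (.inr i.succ)
  | ⟨Idx.Zt i, _⟩ => 2⁻¹ * c (.inl i.succ) - 2⁻¹ * c (.inr i.succ)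

noncomputable def Einv (p : ℕ) (w : Wsub p) : Fin (p + 1) ⊕ Fin (p + 1) → ℝ := fun s =>
  match s with
  | .inl j => Fin.cases (2⁻¹ * w iY + w iYt) (fun i => 2⁻¹ * w (iZ i) + w (iZt i)) j
  | .inr j => Fin.cases (2⁻¹ * w iY - w iYt) (fun i => 2⁻¹ * w (iZ i) - w (iZt i)) j

lemma Emap_iY (c) : Emap p c iY = c (.inl 0) + c (.inr 0) := rfl
lemma Emap_iYt (c) : Emap p c iYt = 2⁻¹ * c (.inl 0) - 2⁻¹ * c (.inr 0) := rfl
lemma Emap_iZ (c) (i : Fin p) : Emap p c (iZ i) = c (.inl i.succ) + c (.inr i.succ) := rfl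
lemma Emap_iZt (c) (i : Fin p) :
    Emap p c (iZt i) = 2⁻¹ * c (.inl i.succ) - 2⁻¹ * c (.inr i.succ) := rfl

noncomputable def Eequiv (p : ℕ) : (Fin (p + 1) ⊕ Fin (p + 1) → ℝ) ≃ₗ[ℝ] Wsub p where
  toFun := Emap p
  invFun := Einv p
  map_add' c c' := by
    funext a
    rcases a with ⟨a, ha⟩
    cases a <;> simp [Emap] <;> ring
  map_smul' r c := by
    funext a
    rcases a with ⟨a, ha⟩
    cases a <;> simp [Emap] <;> ring
  left_inv c := by
    funext s
    rcases s with j | j <;> induction j using Fin.cases <;>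
      simp [Einv, Emap_iY, Emap_iYt, Emap_iZ, Emap_iZt] <;> ring
  right_inv w := by
    funext a
    rcases a with ⟨a, ha⟩
    match a with
    | Idx.X => exact absurd rfl ha
    | Idx.Y =>
      show Emap p (Einv p w) iY = w iY
      rw [Emap_iY]; simp [Einv]; ring
    | Idx.Yt =>
      show Emap p (Einv p w) iYt = w iYt
      rw [Emap_iYt]; simp [Einv]; ring
    | Idx.Z i =>
      show Emap p (Einv p w) (iZ i) = w (iZ i)
      rw [Emap_iZ]; simp [Einv]; ring
    | Idx.Zt i =>
      show Emap p (Einv p w) (iZt i) = w (iZt i)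
      rw [Emap_iZt]; simp [Einv]; ring

lemma JW_Emap (c c' : Fin (p + 1) ⊕ Fin (p + 1) → ℝ) :
    JW p (Emap p c) (Emap p c') =
      ∑ j : Fin (p + 1), (c (.inl j) * c' (.inl j) - c (.inr j) * c' (.inr j)) := by
  rw [JW_apply, Fin.sum_univ_succ]
  simp only [Emap_iY, Emap_iYt, Emap_iZ, Emap_iZt]
  congr 1
  · ring
  · apply Finset.sum_congr rfl
    intro i _
    ring
noncomputable def sigBasis (p : ℕ) : Module.Basis (Fin (p + 1) ⊕ Fin (p + 1)) ℝ (Wsub p) :=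
  (Pi.basisFun ℝ _).map (Eequiv p)

lemma sigBasis_apply (s : Fin (p + 1) ⊕ Fin (p + 1)) :
    sigBasis p s = Emap p (Pi.single s 1) := by
  simp only [sigBasis, Module.Basis.map_apply, Pi.basisFun_apply]
  rfl

lemma sigBasis_JW (s t : Fin (p + 1) ⊕ Fin (p + 1)) :
    JW p (sigBasis p s) (sigBasis p t) =
      if s = t then Sum.elim (fun _ => (1 : ℝ)) (fun _ => (-1 : ℝ)) s else 0 := by
  rw [sigBasis_apply, sigBasis_apply, JW_Emap]
  rcases s with js | js <;> rcases t with jt | jt <;>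
    simp [Pi.single_apply, Finset.sum_ite_eq, Finset.sum_ite_eq', eq_comm, apply_ite (fun x : ℝ => -x)]
end S7

theorem statement7 (p : ℕ) (hp : 1 ≤ p) :
    (∃ b : Module.Basis (Fin (p + 1) ⊕ Fin (p + 1)) ℝ (Wsub p),
        ∀ s t, JW p (b s) (b t) =
          if s = t then Sum.elim (fun _ => (1 : ℝ)) (fun _ => (-1 : ℝ)) s else 0) ∧
    (∀ w : Wsub p, (∀ w' : Wsub p, JW p w w' = 0) → w = 0) ∧
    (∀ g : V p ≃ₗ[ℝ] V p, GA p 0 g → g (e p Idx.X) = e p Idx.X →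
        ∃ γ : Wsub p ≃ₗ[ℝ] Wsub p, ⇑γ = resW p ⇑g ∧
          ∀ w₁ w₂ : Wsub p, JW p (γ w₁) (γ w₂) = JW p w₁ w₂) ∧
    (∀ g₁ g₂ : V p ≃ₗ[ℝ] V p, GA p 0 g₁ → g₁ (e p Idx.X) = e p Idx.X →
        GA p 0 g₂ → g₂ (e p Idx.X) = e p Idx.X →
        resW p ⇑g₁ = resW p ⇑g₂ → g₁ = g₂) ∧
    (∀ γ : Wsub p ≃ₗ[ℝ] Wsub p, (∀ w₁ w₂ : Wsub p, JW p (γ w₁) (γ w₂) = JW p w₁ w₂) →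
        ∃ g : V p ≃ₗ[ℝ] V p, GA p 0 g ∧ g (e p Idx.X) = e p Idx.X ∧ resW p ⇑g = ⇑γ) ∧
    (∀ g₁ g₂ : V p ≃ₗ[ℝ] V p, GA p 0 g₁ → g₁ (e p Idx.X) = e p Idx.X →
        GA p 0 g₂ → g₂ (e p Idx.X) = e p Idx.X →
        resW p (⇑g₁ ∘ ⇑g₂) = resW p ⇑g₁ ∘ resW p ⇑g₂) := by
  refine ⟨⟨S7.sigBasis p, S7.sigBasis_JW⟩, fun w hw => S7.nondeg w hw, ?_, ?_, ?_, ?_⟩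
  · intro g hg hgX
    refine ⟨S7.resEquiv g hg hgX, S7.resEquiv_coe g hg hgX, fun w₁ w₂ => ?_⟩
    rw [S7.resEquiv_coe g hg hgX]
    exact S7.JW_resW g hg hgX w₁ w₂
  · exact fun g₁ g₂ hg₁ hX₁ hg₂ hX₂ h => S7.inj_aux g₁ g₂ hg₁ hX₁ hg₂ hX₂ h
  · exact fun γ hγ => ⟨S7.gEquiv γ, S7.gEquiv_GA γ hγ, S7.gEquiv_X γ, S7.resW_gEquiv γ⟩
  · exact fun g₁ g₂ _ _ hg₂ hX₂ => S7.comp_aux g₁ g₂ hg₂ hX₂
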